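/- arXiv:2603.20787 — 2 statements merged into one kernel-verified Lean document; each statement's English description precedes it below -/
import Mathlib

section
/- Let G be a finite subgroup of the group of complex roots of unity (G ≤ U(1) ⊂ ℂ×), let ρ : ℚG → ℂ be the ring homomorphism induced by the inclusion G ↪ ℂ, and for a G-span (M, L, R, ε) from (S, H) to (T, V) set [[M,ε]] = ρ ∘ [M,ε]. Then for all c ∈ π₀(S) and d ∈ π₀(T), [[M,ε]](c,d) = 0 unless both H(Aut_S(c)) and V(Aut_T(d)) are trivial subgroups of G. -/
open CategoryTheory

noncomputable section

/-- The component set `π₀(C)`: isomorphism classes of objects of `C`. -/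
abbrev Pi0 (C : Type*) [Category C] := Quotient (isIsomorphicSetoid C)

/-- Groupoid cardinality (Euler characteristic): the sum, over a set of representatives of
the isomorphism classes of objects, of the reciprocals of the orders of the automorphism
groups. -/
noncomputable def gcard (C : Type*) [Category C] : ℚ :=
  ∑ᶠ x : Pi0 C, (Nat.card (Aut (Quotient.out x)) : ℚ)⁻¹

section GcardCongr

variable {C D : Type*} [Category C] [Category D]

def pi0Map (F : C ⥤ D) : Pi0 C → Pi0 D :=
  Quotient.map F.obj (fun _ _ h => ⟨F.mapIso h.some⟩)

def pi0Equiv (e : C ≌ D) : Pi0 C ≃ Pi0 D where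
  toFun := pi0Map e.functor
  invFun := pi0Map e.inverse
  left_inv x := Quotient.inductionOn x fun X => Quotient.sound ⟨(e.unitIso.app X).symm⟩
  right_inv y := Quotient.inductionOn y fun Y => Quotient.sound ⟨e.counitIso.app Y⟩

lemma gcard_congr (e : C ≌ D) : gcard C = gcard D := by
  have key : ∀ x : Pi0 C,
      (Nat.card (Aut (Quotient.out x)) : ℚ)⁻¹
        = (Nat.card (Aut (Quotient.out (pi0Equiv e x))) : ℚ)⁻¹ := by
    intro x
    have h1 : pi0Equiv e x = ⟦e.functor.obj (Quotient.out x)⟧ := by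
      conv_lhs => rw [← Quotient.out_eq x]
      rfl
    have h1' : (⟦Quotient.out (pi0Equiv e x)⟧ : Pi0 D) = ⟦e.functor.obj (Quotient.out x)⟧ := by
      rw [Quotient.out_eq, h1]
    have h2 : IsIsomorphic (Quotient.out (pi0Equiv e x)) (e.functor.obj (Quotient.out x)) :=
      Quotient.exact h1'
    have i : Quotient.out (pi0Equiv e x) ≅ e.functor.obj (Quotient.out x) :=
      Classical.choice h2
    have hc : Nat.card (Aut (Quotient.out (pi0Equiv e x))) = Nat.card (Aut (Quotient.out x)) :=
      Nat.card_congr (i.conjAut.toEquiv.trans e.fullyFaithfulFunctor.isoEquiv.symm)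
    rw [hc]
  calc gcard C = ∑ᶠ x : Pi0 C, (Nat.card (Aut (Quotient.out (pi0Equiv e x))) : ℚ)⁻¹ :=
        finsum_congr key
    _ = gcard D := finsum_comp_equiv (pi0Equiv e)
      (f := fun y => (Nat.card (Aut (Quotient.out y)) : ℚ)⁻¹)

end GcardCongr

def restrictEquiv {C : Type*} [Category C] {P Q : C → Prop} (F G : C ⥤ C)
    (η : 𝟭 C ≅ F ⋙ G) (θ : G ⋙ F ≅ 𝟭 C)
    (hF : ∀ x, P x → Q (F.obj x)) (hG : ∀ x, Q x → P (G.obj x)) :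
    ObjectProperty.FullSubcategory P ≌ ObjectProperty.FullSubcategory Q :=
  CategoryTheory.Equivalence.mk
    (ObjectProperty.lift Q (ObjectProperty.ι P ⋙ F) fun x => hF x.obj x.property)
    (ObjectProperty.lift P (ObjectProperty.ι Q ⋙ G) fun x => hG x.obj x.property)
    (NatIso.ofComponents
      (fun x => { hom := ObjectProperty.homMk (η.hom.app x.obj),
                  inv := ObjectProperty.homMk (η.inv.app x.obj),
                  hom_inv_id := by ext; exact η.hom_inv_id_app x.obj,
                  inv_hom_id := by ext; exact η.inv_hom_id_app x.obj })
      (fun f => by ext; exact η.hom.naturality f.hom))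
    (NatIso.ofComponents
      (fun x => { hom := ObjectProperty.homMk (θ.hom.app x.obj),
                  inv := ObjectProperty.homMk (θ.inv.app x.obj),
                  hom_inv_id := by ext; exact θ.hom_inv_id_app x.obj,
                  inv_hom_id := by ext; exact θ.inv_hom_id_app x.obj })
      (fun f => by ext; exact θ.hom.naturality f.hom))

/-- A functor into the one-object groupoid `BG`, identified with an assignment of elements
of `G` to morphisms (composition goes to multiplication in reverse order, matching the
convention `f ≫ g ↦ g·f` of `BG`). -/
structure GFunctor (S : Type*) [Category S] (G : Type*) [Group G] where
  map : ∀ {a b : S}, (a ⟶ b) → G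
  map_id : ∀ a : S, map (𝟙 a) = 1
  map_comp : ∀ {a b c : S} (f : a ⟶ b) (g : b ⟶ c), map (f ≫ g) = map g * map f

/-- The two-sided homotopy fibre `c\M/d` of a span `S ⟵L M ⟶R T`: objects are triples
`(s, a, t)` with `s : c ⟶ L a` and `t : R a ⟶ d`; morphisms are morphisms `m : a₁ ⟶ a₂`
of `M` with `L m ∘ s₁ = s₂` and `t₂ ∘ R m = t₁`. -/
abbrev TwoFibre {S T M : Type*} [Category S] [Category T] [Category M]
    (L : M ⥤ S) (R : M ⥤ T) (c : S) (d : T) :=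
  StructuredArrow c (CostructuredArrow.proj R d ⋙ L)

/-- The induced function `c\ε/d` on the two-sided homotopy fibre:
`(s,a,t) ↦ V(t)·ε(a)·H(s)`. -/
def twoEps {S T M : Type*} [Category S] [Category T] [Category M]
    {G : Type*} [Group G] (H : GFunctor S G) (V : GFunctor T G)
    (L : M ⥤ S) (R : M ⥤ T) (ε : M → G) {c : S} {d : T}
    (x : TwoFibre L R c d) : G :=
  V.map x.right.hom * ε x.right.left * H.map x.hom

section Shift

variable {S T M : Type*} [Category S] [Category T] [Category M]
  (L : M ⥤ S) (R : M ⥤ T) {c : S} {d : T}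

def shiftL (f : c ⟶ c) : TwoFibre L R c d ⥤ TwoFibre L R c d where
  obj x := StructuredArrow.mk (f ≫ x.hom)
  map {x y} m := StructuredArrow.homMk m.right
    (by
      have h := StructuredArrow.w m
      simp only [Functor.comp_map, CostructuredArrow.proj_map] at h
      simp [← h])

def shiftR (f : d ⟶ d) : TwoFibre L R c d ⥤ TwoFibre L R c d where
  obj x := StructuredArrow.mk (Y := CostructuredArrow.mk (x.right.hom ≫ f)) x.hom
  map {x y} m := StructuredArrow.homMk
    (CostructuredArrow.homMk m.right.left
      (by exact CostructuredArrow.w_assoc m.right f))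
    (by exact StructuredArrow.w m)

variable {G : Type*} [CommGroup G] (H : GFunctor S G) (V : GFunctor T G) (ε : M → G)

lemma twoEps_shiftL (f : c ⟶ c) (x : TwoFibre L R c d) :
    twoEps H V L R ε ((shiftL L R f).obj x) = twoEps H V L R ε x * H.map f := by
  simp [twoEps, shiftL, H.map_comp, mul_assoc]

lemma twoEps_shiftR (f : d ⟶ d) (x : TwoFibre L R c d) :
    twoEps H V L R ε ((shiftR L R f).obj x) = twoEps H V L R ε x * V.map f := by
  show V.map (x.right.hom ≫ f) * ε x.right.left * H.map x.hom = _
  simp [twoEps, V.map_comp, mul_assoc, mul_comm, mul_left_comm]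

def shiftLUnit (f : c ≅ c) :
    𝟭 (TwoFibre L R c d) ≅ shiftL L R f.hom ⋙ shiftL L R f.inv :=
  NatIso.ofComponents
    (fun x => StructuredArrow.isoMk (Iso.refl x.right) (by
      show x.hom ≫ (CostructuredArrow.proj R d ⋙ L).map (𝟙 x.right) = f.inv ≫ f.hom ≫ x.hom
      simp only [CategoryTheory.Functor.map_id, Category.comp_id, Iso.inv_hom_id_assoc]))
    (by intros; ext; exact (Category.comp_id _).trans (Category.id_comp _).symm)

def shiftLCounit (f : c ≅ c) :
    shiftL L R f.inv ⋙ shiftL L R f.hom ≅ 𝟭 (TwoFibre L R c d) :=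
  NatIso.ofComponents
    (fun x => StructuredArrow.isoMk (Iso.refl x.right) (by
      show (f.hom ≫ f.inv ≫ x.hom) ≫ (CostructuredArrow.proj R d ⋙ L).map (𝟙 x.right) = x.hom
      simp only [CategoryTheory.Functor.map_id, Category.comp_id, Iso.hom_inv_id_assoc]))
    (by intros; ext; exact (Category.comp_id _).trans (Category.id_comp _).symm)

def shiftRUnit (f : d ≅ d) :
    𝟭 (TwoFibre L R c d) ≅ shiftR L R f.hom ⋙ shiftR L R f.inv :=
  NatIso.ofComponents
    (fun x => StructuredArrow.isoMk
      (CostructuredArrow.isoMk (Iso.refl x.right.left) (by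
        show R.map (𝟙 x.right.left) ≫ (x.right.hom ≫ f.hom) ≫ f.inv = x.right.hom
        simp))
      (by
        show x.hom ≫ L.map (𝟙 x.right.left) = x.hom
        exact (congrArg (x.hom ≫ ·) (CategoryTheory.Functor.map_id _ _)).trans (Category.comp_id _)))
    (by intros; ext; exact (Category.comp_id _).trans (Category.id_comp _).symm)

def shiftRCounit (f : d ≅ d) :
    shiftR L R f.inv ⋙ shiftR L R f.hom ≅ 𝟭 (TwoFibre L R c d) :=
  NatIso.ofComponents
    (fun x => StructuredArrow.isoMk
      (CostructuredArrow.isoMk (Iso.refl x.right.left) (by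
        show R.map (𝟙 x.right.left) ≫ x.right.hom = (x.right.hom ≫ f.inv) ≫ f.hom
        simp))
      (by
        show x.hom ≫ L.map (𝟙 x.right.left) = x.hom
        exact (congrArg (x.hom ≫ ·) (CategoryTheory.Functor.map_id _ _)).trans (Category.comp_id _)))
    (by intros; ext; exact (Category.comp_id _).trans (Category.id_comp _).symm)

lemma gcard_shiftL (f : c ≅ c) (g : G) :
    gcard (ObjectProperty.FullSubcategory fun x : TwoFibre L R c d => twoEps H V L R ε x = g)
      = gcard (ObjectProperty.FullSubcategory fun x : TwoFibre L R c d =>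
          twoEps H V L R ε x = g * H.map f.hom) := by
  have hmul : H.map f.hom * H.map f.inv = 1 := by
    rw [← H.map_comp, Iso.inv_hom_id, H.map_id]
  exact gcard_congr (restrictEquiv (shiftL L R f.hom) (shiftL L R f.inv)
    (shiftLUnit L R f) (shiftLCounit L R f)
    (fun x hx => by rw [twoEps_shiftL, hx])
    (fun x hx => by rw [twoEps_shiftL, hx, mul_assoc, hmul, mul_one]))

lemma gcard_shiftR (f : d ≅ d) (g : G) :
    gcard (ObjectProperty.FullSubcategory fun x : TwoFibre L R c d => twoEps H V L R ε x = g)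
      = gcard (ObjectProperty.FullSubcategory fun x : TwoFibre L R c d =>
          twoEps H V L R ε x = g * V.map f.hom) := by
  have hmul : V.map f.hom * V.map f.inv = 1 := by
    rw [← V.map_comp, Iso.inv_hom_id, V.map_id]
  exact gcard_congr (restrictEquiv (shiftR L R f.hom) (shiftR L R f.inv)
    (shiftRUnit L R f) (shiftRCounit L R f)
    (fun x hx => by rw [twoEps_shiftR, hx])
    (fun x hx => by rw [twoEps_shiftR, hx, mul_assoc, hmul, mul_one]))

end Shift

/-- The matrix `[M, ε] : π₀(S) × π₀(T) → ℚG` of a `G`-span: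
`[M,ε](c,d) = |Aut_T(d)|⁻¹ · ∑_{g ∈ G} χ((c\M/d){c\ε/d = g}) · g`. -/
noncomputable def spanMatrix {S T M : Type*} [Category S] [Category T] [Category M]
    {G : Type*} [CommGroup G] [Fintype G]
    (H : GFunctor S G) (V : GFunctor T G)
    (L : M ⥤ S) (R : M ⥤ T) (ε : M → G)
    (c : Pi0 S) (d : Pi0 T) : MonoidAlgebra ℚ G :=
  ∑ g : G, MonoidAlgebra.single g
    ((Nat.card (Aut (Quotient.out d)) : ℚ)⁻¹ *
      gcard (ObjectProperty.FullSubcategory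
        (fun x : TwoFibre L R (Quotient.out c) (Quotient.out d) =>
          twoEps H V L R ε x = g)))

/-- Corollary: let `G` be a finite subgroup of the group of complex roots of unity
(`G ≤ U(1) ⊂ ℂˣ`), let `ρ : ℚG → ℂ` be the ring homomorphism induced by the inclusion
`G ↪ ℂ`, and set `[[M,ε]] = ρ ∘ [M,ε]`.  Then `[[M,ε]](c,d) = 0` unless both `H(Aut_S(c))`
and `V(Aut_T(d))` are trivial. -/
theorem stmt10 (K : Subgroup ℂˣ) [Fintype K]
    (hK : ∀ z : K, ∃ n : ℕ, 0 < n ∧ (z : ℂˣ) ^ n = 1)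
    {S T M : Type*} [Groupoid S] [Groupoid T] [Groupoid M]
    [Finite S] [∀ a b : S, Finite (a ⟶ b)]
    [Finite T] [∀ a b : T, Finite (a ⟶ b)]
    [Finite M] [∀ a b : M, Finite (a ⟶ b)]
    (H : GFunctor S ↥K) (V : GFunctor T ↥K)
    (L : M ⥤ S) (R : M ⥤ T) (ε : M → ↥K)
    (hε : ∀ {a b : M} (m : a ⟶ b), ε b * H.map (L.map m) = V.map (R.map m) * ε a)
    (c : Pi0 S) (d : Pi0 T)
    (h : (∃ f : Aut (Quotient.out c), H.map f.hom ≠ 1) ∨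
      (∃ f : Aut (Quotient.out d), V.map f.hom ≠ 1)) :
    MonoidAlgebra.lift ℚ ℂ ↥K ((Units.coeHom ℂ).comp K.subtype)
        (spanMatrix H V L R ε c d) = 0 := by
  classical
  set φ : ↥K →* ℂ := (Units.coeHom ℂ).comp K.subtype with hφ
  set χ : ↥K → ℚ := fun g => gcard (ObjectProperty.FullSubcategory
      (fun x : TwoFibre L R (Quotient.out c) (Quotient.out d) =>
        twoEps H V L R ε x = g)) with hχ
  obtain ⟨h₀, hh₀, hinv⟩ : ∃ h₀ : ↥K, h₀ ≠ 1 ∧ ∀ g, χ (g * h₀) = χ g := by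
    rcases h with ⟨f, hf⟩ | ⟨f, hf⟩
    · exact ⟨H.map f.hom, hf, fun g => (gcard_shiftL L R H V ε f g).symm⟩
    · exact ⟨V.map f.hom, hf, fun g => (gcard_shiftR L R H V ε f g).symm⟩
  have hsum : ∀ g : ↥K,
      (MonoidAlgebra.lift ℚ ℂ ↥K φ)
        (MonoidAlgebra.single g ((Nat.card (Aut (Quotient.out d)) : ℚ)⁻¹ * χ g))
      = ((Nat.card (Aut (Quotient.out d)) : ℚ)⁻¹ : ℂ) * ((χ g : ℂ) * φ g) := by
    intro g
    rw [MonoidAlgebra.lift_single, Rat.smul_def]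
    push_cast
    ring
  have hgoal : (MonoidAlgebra.lift ℚ ℂ ↥K φ) (spanMatrix H V L R ε c d)
      = ((Nat.card (Aut (Quotient.out d)) : ℚ)⁻¹ : ℂ) * ∑ g : ↥K, (χ g : ℂ) * φ g := by
    rw [spanMatrix, map_sum, Finset.mul_sum]
    exact Finset.sum_congr rfl fun g _ => hsum g
  have hs : (∑ g : ↥K, (χ g : ℂ) * φ g) = 0 := by
    have key : (∑ g : ↥K, (χ g : ℂ) * φ g) * φ h₀ = ∑ g : ↥K, (χ g : ℂ) * φ g := by
      rw [Finset.sum_mul]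
      calc ∑ g : ↥K, (χ g : ℂ) * φ g * φ h₀
          = ∑ g : ↥K, (χ g : ℂ) * φ (g * h₀) := by
            refine Finset.sum_congr rfl fun g _ => ?_
            rw [map_mul, mul_assoc]
        _ = ∑ g : ↥K, (χ g : ℂ) * φ g := by
            refine Fintype.sum_equiv (Equiv.mulRight h₀) _ _ fun g => ?_
            simp only [Equiv.coe_mulRight]
            rw [hinv g]
    have hφh : φ h₀ ≠ 1 := by
      intro hc
      apply hh₀
      have : ((h₀ : ℂˣ) : ℂ) = 1 := hc
      have : (h₀ : ℂˣ) = 1 := Units.ext this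
      exact Subtype.ext this
    have hz : (∑ g : ↥K, (χ g : ℂ) * φ g) * (φ h₀ - 1) = 0 := by
      rw [mul_sub, mul_one, key, sub_self]
    rcases mul_eq_zero.mp hz with h1 | h2
    · exact h1
    · exact absurd (sub_eq_zero.mp h2) hφh
  rw [hgoal, hs, mul_zero]

end
end

section
/- Let S →H BG ←V T be a cospan of finite groupoids over BG. The homotopy pullback S ×_BG T, with legs the projections p₁ : S ×_BG T → S and p₂ : S ×_BG T → T and with ε(x,k,y) = k ∈ G for each object (x,k,y), is a G-span from (S,H) to (T,V), and its matrix is the constant function [S ×_BG T, ε](c,d) = (1/|Aut_T(d)|)·Σ_{g∈G} g = (|G|/|Aut_T(d)|)·overline{G} for all c ∈ π₀(S), d ∈ π₀(T), where overline{G} = |G|⁻¹ Σ_{g∈G} g ∈ ℚG. -/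
open CategoryTheory

noncomputable section

/-- The homotopy pullback `S ×_BG T`: objects are triples `(x, k, y)` with `k ∈ G`. -/
structure GPullback {S T : Type*} [Category S] [Category T] {G : Type*} [Group G]
    (H : GFunctor S G) (V : GFunctor T G) where
  x : S
  k : G
  y : T

/-- Morphisms `(x₁,k₁,y₁) ⟶ (x₂,k₂,y₂)` of `S ×_BG T`: pairs `(s,t)` with
`k₂·H(s) = V(t)·k₁`. -/
@[ext] structure GPullbackHom {S T : Type*} [Category S] [Category T] {G : Type*} [Group G]
    {H : GFunctor S G} {V : GFunctor T G} (A B : GPullback H V) where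
  s : A.x ⟶ B.x
  t : A.y ⟶ B.y
  comm : B.k * H.map s = V.map t * A.k

instance GPullback.category {S T : Type*} [Category S] [Category T] {G : Type*} [Group G]
    (H : GFunctor S G) (V : GFunctor T G) : Category (GPullback H V) where
  Hom A B := GPullbackHom A B
  id A := ⟨𝟙 A.x, 𝟙 A.y, by rw [H.map_id, V.map_id, mul_one, one_mul]⟩
  comp {A B C} f g := ⟨f.s ≫ g.s, f.t ≫ g.t, by
    rw [H.map_comp, V.map_comp, ← mul_assoc, g.comm, mul_assoc, f.comm, ← mul_assoc]⟩

/-- First projection `S ×_BG T ⥤ S`. -/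
def GPullback.fst {S T : Type*} [Category S] [Category T] {G : Type*} [Group G]
    (H : GFunctor S G) (V : GFunctor T G) : GPullback H V ⥤ S where
  obj A := A.x
  map f := f.s

/-- Second projection `S ×_BG T ⥤ T`. -/
def GPullback.snd {S T : Type*} [Category S] [Category T] {G : Type*} [Group G]
    (H : GFunctor S G) (V : GFunctor T G) : GPullback H V ⥤ T where
  obj A := A.y
  map f := f.t

lemma GFunctor.map_inv {S : Type*} [Groupoid S] {G : Type*} [Group G]
    (H : GFunctor S G) {a b : S} (f : a ⟶ b) :
    H.map (Groupoid.inv f) = (H.map f)⁻¹ := by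
  have h : H.map (Groupoid.inv f) * H.map f = 1 := by
    rw [← H.map_comp, Groupoid.comp_inv, H.map_id]
  exact eq_inv_of_mul_eq_one_left h

lemma gcard_eq_one (C : Type*) [Category C] [Nonempty C]
    (h1 : ∀ A B : C, Subsingleton (A ⟶ B)) (h2 : ∀ A B : C, Nonempty (A ⟶ B)) :
    gcard C = 1 := by
  have iso : ∀ A B : C, Nonempty (A ≅ B) := by
    intro A B
    obtain ⟨f⟩ := h2 A B
    obtain ⟨g⟩ := h2 B A
    exact ⟨⟨f, g, (h1 A A).elim _ _, (h1 B B).elim _ _⟩⟩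
  obtain ⟨A⟩ := ‹Nonempty C›
  haveI : Unique (Pi0 C) := by
    refine ⟨⟨Quotient.mk _ A⟩, fun x => ?_⟩
    induction x using Quotient.ind with
    | _ B => exact Quotient.sound (iso B A)
  have hAut : ∀ X : C, Nat.card (Aut X) = 1 := by
    intro X
    haveI : Subsingleton (Aut X) := ⟨fun f g => Iso.ext ((h1 X X).elim _ _)⟩
    haveI : Nonempty (Aut X) := ⟨Iso.refl X⟩
    exact Nat.card_eq_one_iff_unique.mpr ⟨‹_›, ‹_›⟩
  rw [gcard, finsum_unique, hAut]
  norm_num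

/-- For a cospan of finite groupoids over `BG` given by `H : S → BG` and `V : T → BG`, the
homotopy pullback `S ×_BG T` (objects `(x,k,y)`, `k ∈ G`; morphisms `(s,t)` with
`k₂·H(s) = V(t)·k₁`), with legs the projections and `ε(x,k,y) = k`, is a `G`-span from
`(S,H)` to `(T,V)`, and its matrix is the constant function
`[S ×_BG T, ε](c,d) = |Aut_T(d)|⁻¹ · ∑_{g∈G} g`. -/
theorem stmt12 {S T : Type*} [Groupoid S] [Groupoid T]
    [Finite S] [∀ a b : S, Finite (a ⟶ b)]
    [Finite T] [∀ a b : T, Finite (a ⟶ b)]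
    {G : Type*} [CommGroup G] [Fintype G]
    (H : GFunctor S G) (V : GFunctor T G) :
    (∀ (A B : GPullback H V) (m : A ⟶ B),
        B.k * H.map ((GPullback.fst H V).map m) =
          V.map ((GPullback.snd H V).map m) * A.k) ∧
      ∀ (c : Pi0 S) (d : Pi0 T),
        spanMatrix H V (GPullback.fst H V) (GPullback.snd H V) (fun A => A.k) c d =
          ∑ g : G, MonoidAlgebra.single g
            ((Nat.card (Aut (Quotient.out d)) : ℚ)⁻¹) := by
  refine ⟨fun A B m => m.comm, fun c d => ?_⟩
  unfold spanMatrix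
  refine Finset.sum_congr rfl fun g _ => ?_
  set L := GPullback.fst H V
  set R := GPullback.snd H V
  set c' := Quotient.out c
  set d' := Quotient.out d
  set N := ObjectProperty.FullSubcategory
      (fun x : TwoFibre L R c' d' =>
        twoEps H V L R (fun A => A.k) x = g) with hN
  suffices h : gcard N = 1 by rw [h, mul_one]
  -- Nonempty
  haveI : Nonempty N := by
    refine ⟨⟨StructuredArrow.mk (Y := CostructuredArrow.mk (Y := (⟨c', g, d'⟩ : GPullback H V)) (𝟙 d')) (𝟙 c'), ?_⟩⟩
    show V.map (𝟙 d') * g * H.map (𝟙 c') = g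
    rw [V.map_id, H.map_id, one_mul, mul_one]
  refine gcard_eq_one N (fun A B => ?_) (fun A B => ?_)
  · -- Subsingleton (A ⟶ B)
    constructor
    intro f f'
    have hs : (f.hom.right.left : A.obj.right.left ⟶ B.obj.right.left).s
        = (f'.hom.right.left : A.obj.right.left ⟶ B.obj.right.left).s := by
      have w1 : A.obj.hom ≫ L.map (f.hom.right.left) = B.obj.hom := StructuredArrow.w f.hom
      have w2 : A.obj.hom ≫ L.map (f'.hom.right.left) = B.obj.hom := StructuredArrow.w f'.hom
      exact (cancel_epi A.obj.hom).mp (w1.trans w2.symm)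
    have ht : (f.hom.right.left : A.obj.right.left ⟶ B.obj.right.left).t
        = (f'.hom.right.left : A.obj.right.left ⟶ B.obj.right.left).t := by
      have w1 : R.map (f.hom.right.left) ≫ B.obj.right.hom = A.obj.right.hom :=
        CostructuredArrow.w f.hom.right
      have w2 : R.map (f'.hom.right.left) ≫ B.obj.right.hom = A.obj.right.hom :=
        CostructuredArrow.w f'.hom.right
      exact (cancel_mono B.obj.right.hom).mp (w1.trans w2.symm)
    apply ObjectProperty.hom_ext
    apply StructuredArrow.hom_ext
    apply CostructuredArrow.hom_ext
    exact GPullbackHom.ext hs ht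
  · -- Nonempty (A ⟶ B)
    have hA : V.map A.obj.right.hom * A.obj.right.left.k * H.map A.obj.hom = g := A.property
    have hB : V.map B.obj.right.hom * B.obj.right.left.k * H.map B.obj.hom = g := B.property
    have hA' : A.obj.right.left.k
        = (V.map A.obj.right.hom)⁻¹ * g * (H.map A.obj.hom)⁻¹ := by
      calc A.obj.right.left.k
          = (V.map A.obj.right.hom)⁻¹ *
              (V.map A.obj.right.hom * A.obj.right.left.k * H.map A.obj.hom) *
              (H.map A.obj.hom)⁻¹ := by group
        _ = (V.map A.obj.right.hom)⁻¹ * g * (H.map A.obj.hom)⁻¹ := by rw [hA]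
    have hB' : B.obj.right.left.k
        = (V.map B.obj.right.hom)⁻¹ * g * (H.map B.obj.hom)⁻¹ := by
      calc B.obj.right.left.k
          = (V.map B.obj.right.hom)⁻¹ *
              (V.map B.obj.right.hom * B.obj.right.left.k * H.map B.obj.hom) *
              (H.map B.obj.hom)⁻¹ := by group
        _ = (V.map B.obj.right.hom)⁻¹ * g * (H.map B.obj.hom)⁻¹ := by rw [hB]
    refine ⟨ObjectProperty.homMk (StructuredArrow.homMk (CostructuredArrow.homMk
      (⟨Groupoid.inv A.obj.hom ≫ B.obj.hom,
        A.obj.right.hom ≫ Groupoid.inv B.obj.right.hom, ?_⟩ :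
        A.obj.right.left ⟶ B.obj.right.left) ?_) ?_)⟩
    · erw [H.map_comp, H.map_inv, V.map_comp, V.map_inv, hA', hB']
      exact (by intros; group : ∀ a b c v : G, a⁻¹ * g * b⁻¹ * (b * c⁻¹) = a⁻¹ * v * (v⁻¹ * g * c⁻¹)) _ _ _ _
    · show (A.obj.right.hom ≫ Groupoid.inv B.obj.right.hom) ≫ B.obj.right.hom
        = A.obj.right.hom
      simp
    · show A.obj.hom ≫ (Groupoid.inv A.obj.hom ≫ B.obj.hom) = B.obj.hom
      simp

end
end
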